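/- Let R be an integral domain with field of fractions K, let M be a finitely generated projective R-module and q : M → R a quadratic form whose base change q_K to K is anisotropic (q_K(v) = 0 implies v = 0 for v ∈ M ⊗_R K). Then the unit sphere of q does not grow under polynomial or Laurent polynomial extension: every element m of M ⊗_R R[t] with (q base-changed to R[t])(m) = 1 is of the form m₀ ⊗ 1 for some m₀ ∈ M with q(m₀) = 1, and likewise every element m of M ⊗_R R[t, t⁻¹] with (q base-changed to R[t,t⁻¹])(m) = 1 is of the form m₀ ⊗ 1 for some m₀ ∈ M with q(m₀) = 1. -/

import Mathlib

open TensorProduct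

section Aux

variable {R M : Type*} [CommRing R] [AddCommGroup M] [Module R M]

private lemma repr_tensor {ι A : Type*} [CommRing A] [Algebra R A] (e : ι → A)
    (he : ∀ a : A, ∃ (s : Finset ι) (c : ι → R), a = ∑ k ∈ s, c k • e k)
    (z : A ⊗[R] M) :
    ∃ (s : Finset ι) (n : ι → M), z = ∑ k ∈ s, e k ⊗ₜ[R] n k := by
  classical
  induction z with
  | zero => exact ⟨∅, 0, by simp⟩
  | tmul a m =>
    obtain ⟨s, c, rfl⟩ := he a
    exact ⟨s, fun k => c k • m, by
      rw [TensorProduct.sum_tmul]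
      exact Finset.sum_congr rfl fun k _ => TensorProduct.smul_tmul _ _ _⟩
  | add z1 z2 h1 h2 =>
    obtain ⟨s1, n1, rfl⟩ := h1
    obtain ⟨s2, n2, rfl⟩ := h2
    refine ⟨s1 ∪ s2,
      fun k => (if k ∈ s1 then n1 k else 0) + (if k ∈ s2 then n2 k else 0), ?_⟩
    simp only [TensorProduct.tmul_add, Finset.sum_add_distrib]
    congr 1
    · rw [← Finset.sum_subset Finset.subset_union_left
        (fun x _ hx => by rw [if_neg hx, TensorProduct.tmul_zero])]
      exact Finset.sum_congr rfl fun k hk => by rw [if_pos hk]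
    · rw [← Finset.sum_subset Finset.subset_union_right
        (fun x _ hx => by rw [if_neg hx, TensorProduct.tmul_zero])]
      exact Finset.sum_congr rfl fun k hk => by rw [if_pos hk]

private lemma key_coeff {ι A N : Type*} [DecidableEq ι] [CommRing A] [AddCommGroup N]
    [Module A N] (Q : QuadraticForm A N) (φ : A →+ R) (f : ι → N) (s : Finset ι)
    (d : ι) (hd : d ∈ s) (v : R)
    (h1 : ∀ i ∈ s, φ (Q (f i)) = if i = d then v else 0)
    (h2 : ∀ i ∈ s, ∀ j ∈ s, i ≠ j → φ (QuadraticMap.polar (⇑Q) (f i) (f j)) = 0) :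
    φ (Q (∑ k ∈ s, f k)) = v := by
  rw [QuadraticMap.map_sum, map_add, map_sum, map_sum, Finset.sum_congr rfl h1,
    Finset.sum_ite_eq' s d (fun _ => v), if_pos hd]
  have h0 : ∀ ij ∈ Finset.filter (fun ij => ¬ ij.IsDiag) s.sym2,
      φ (Sym2.lift ⟨fun i j => QuadraticMap.polar (⇑Q) (f i) (f j),
        fun _ _ => QuadraticMap.polar_comm _ _ _⟩ ij) = 0 := by
    refine fun ij => Sym2.ind (fun i j hij => ?_) ij
    rw [Finset.mem_filter, Finset.mk_mem_sym2_iff] at hij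
    rw [Sym2.lift_mk]
    exact h2 i hij.1.1 j hij.1.2 (by simpa [Sym2.mk_isDiag_iff] using hij.2)
  rw [Finset.sum_eq_zero (fun ij hij => by induction ij using Sym2.ind; exact h0 _ hij), add_zero]

end Aux


/-- Let `R` be an integral domain with fraction field `K`, `M` a finitely
generated projective `R`-module and `q` a quadratic form on `M` whose base
change to `K` is anisotropic.  Then the unit sphere of `q` does not grow under
polynomial or Laurent polynomial extension: every unit-norm element of the
base change of `q` to `R[t]` (resp. `R[t,t⁻¹]`) comes from a unit-norm element
of `M`.  The base-changed forms are given as data characterized by their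
values and polar values on pure tensors. -/
theorem sphere_rigid_under_polynomial_extension
    {R M : Type*} [CommRing R] [IsDomain R] [AddCommGroup M] [Module R M]
    [Module.Finite R M] [Module.Projective R M]
    (q : QuadraticForm R M)
    (K : Type*) [Field K] [Algebra R K] [IsFractionRing R K]
    (qK : QuadraticForm K (K ⊗[R] M))
    (hK1 : ∀ (c : K) (m : M), qK (c ⊗ₜ[R] m) = c ^ 2 * algebraMap R K (q m))
    (hK2 : ∀ (c c' : K) (m m' : M),
      QuadraticMap.polar (⇑qK) (c ⊗ₜ[R] m) (c' ⊗ₜ[R] m') =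
        c * c' * algebraMap R K (QuadraticMap.polar (⇑q) m m'))
    (hKa : qK.Anisotropic)
    (qP : QuadraticForm (Polynomial R) (Polynomial R ⊗[R] M))
    (hP1 : ∀ (c : Polynomial R) (m : M),
      qP (c ⊗ₜ[R] m) = c ^ 2 * Polynomial.C (q m))
    (hP2 : ∀ (c c' : Polynomial R) (m m' : M),
      QuadraticMap.polar (⇑qP) (c ⊗ₜ[R] m) (c' ⊗ₜ[R] m') =
        c * c' * Polynomial.C (QuadraticMap.polar (⇑q) m m'))
    (qL : QuadraticForm (LaurentPolynomial R) (LaurentPolynomial R ⊗[R] M))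
    (hL1 : ∀ (c : LaurentPolynomial R) (m : M),
      qL (c ⊗ₜ[R] m) = c ^ 2 * algebraMap R (LaurentPolynomial R) (q m))
    (hL2 : ∀ (c c' : LaurentPolynomial R) (m m' : M),
      QuadraticMap.polar (⇑qL) (c ⊗ₜ[R] m) (c' ⊗ₜ[R] m') =
        c * c' * algebraMap R (LaurentPolynomial R) (QuadraticMap.polar (⇑q) m m')) :
    (∀ z : Polynomial R ⊗[R] M, qP z = 1 →
      ∃ m₀ : M, q m₀ = 1 ∧ z = 1 ⊗ₜ[R] m₀) ∧
    (∀ z : LaurentPolynomial R ⊗[R] M, qL z = 1 →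
      ∃ m₀ : M, q m₀ = 1 ∧ z = 1 ⊗ₜ[R] m₀) := by
  classical
  -- `m ↦ 1 ⊗ m` into `K ⊗ M` is injective since `M` is flat
  have hinj : ∀ m : M, (1 : K) ⊗ₜ[R] m = 0 → m = 0 := by
    intro m hm
    have hf : Function.Injective ((Algebra.linearMap R K).rTensor M) :=
      Module.Flat.rTensor_preserves_injective_linearMap _ (IsFractionRing.injective R K)
    have h0 : (Algebra.linearMap R K).rTensor M ((1 : R) ⊗ₜ[R] m) =
        (Algebra.linearMap R K).rTensor M 0 := by
      rw [LinearMap.rTensor_tmul, map_zero]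
      simpa using hm
    have h1 : (1 : R) ⊗ₜ[R] m = 0 := hf h0
    have h2 := congrArg (TensorProduct.lid R M) h1
    simpa using h2
  have hq0 : ∀ m : M, q m = 0 → m = 0 := by
    intro m hm
    refine hinj m (hKa _ ?_)
    rw [hK1, hm, map_zero, mul_zero]
  constructor
  · -- polynomial case
    intro z hz
    have heP : ∀ a : Polynomial R, ∃ (s : Finset ℕ) (c : ℕ → R),
        a = ∑ k ∈ s, c k • (Polynomial.X : Polynomial R) ^ k := by
      intro a
      refine ⟨a.support, a.coeff, ?_⟩
      conv_lhs => rw [a.as_sum_support_C_mul_X_pow]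
      exact Finset.sum_congr rfl fun k _ => (Polynomial.smul_eq_C_mul _).symm
    obtain ⟨s, n, rfl⟩ := repr_tensor (R := R) (M := M)
      (fun k : ℕ => (Polynomial.X : Polynomial R) ^ k) heP z
    have hzz : ∑ k ∈ s, ((Polynomial.X : Polynomial R) ^ k) ⊗ₜ[R] n k =
        ∑ k ∈ s.filter (fun k => n k ≠ 0), ((Polynomial.X : Polynomial R) ^ k) ⊗ₜ[R] n k := by
      symm
      refine Finset.sum_filter_of_ne ?_
      intro x hx h hnx
      exact h (by rw [hnx, TensorProduct.tmul_zero])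
    set s' := s.filter (fun k => n k ≠ 0) with hs'
    rw [hzz] at hz ⊢
    have hall : ∀ k ∈ s', k = 0 := by
      intro k hk
      by_contra hk0
      have hne : s'.Nonempty := ⟨k, hk⟩
      set d := s'.max' hne with hd
      have hds : d ∈ s' := s'.max'_mem hne
      have hd0 : d ≠ 0 := fun h => hk0 (Nat.le_zero.mp (h ▸ s'.le_max' k hk))
      have hcoeff := key_coeff (R := R) qP ((Polynomial.lcoeff R (d + d)).toAddMonoidHom)
        (fun k => ((Polynomial.X : Polynomial R) ^ k) ⊗ₜ[R] n k) s' d hds (q (n d))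
        (fun i hi => by
          have hle : i ≤ d := s'.le_max' i hi
          rw [hP1, sq, ← pow_add]
          simp only [LinearMap.toAddMonoidHom_coe, Polynomial.lcoeff_apply,
            Polynomial.coeff_mul_C, Polynomial.coeff_X_pow]
          by_cases hid : i = d
          · simp [hid]
          · have h1 : ¬ (d + d = i + i) := by omega
            simp [h1, hid])
        (fun i hi j hj hij => by
          have hlei : i ≤ d := s'.le_max' i hi
          have hlej : j ≤ d := s'.le_max' j hj
          rw [hP2, ← pow_add]
          simp only [LinearMap.toAddMonoidHom_coe, Polynomial.lcoeff_apply,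
            Polynomial.coeff_mul_C, Polynomial.coeff_X_pow]
          have h1 : ¬ (d + d = i + j) := by omega
          simp [h1])
      rw [hz] at hcoeff
      have hnd : q (n d) = 0 := by
        rw [← hcoeff]
        simp [Polynomial.coeff_one, hd0]
      exact (Finset.mem_filter.mp hds).2 (hq0 _ hnd)
    rcases Finset.subset_singleton_iff.mp
        (fun k hk => Finset.mem_singleton.mpr (hall k hk)) with h | h
    · rw [h, Finset.sum_empty, QuadraticMap.map_zero] at hz
      exact absurd hz zero_ne_one
    · rw [h, Finset.sum_singleton, pow_zero] at hz ⊢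
      rw [hP1, one_pow, one_mul] at hz
      exact ⟨n 0, Polynomial.C_injective (hz.trans Polynomial.C_1.symm), rfl⟩
  · -- Laurent polynomial case
    intro z hz
    have hCinj : Function.Injective (LaurentPolynomial.C : R →+* LaurentPolynomial R) := by
      intro a b h
      simpa using congrArg (fun p : LaurentPolynomial R => p.coeff (0 : ℤ)) h
    have heL : ∀ a : LaurentPolynomial R, ∃ (s : Finset ℤ) (c : ℤ → R),
        a = ∑ k ∈ s, c k • (LaurentPolynomial.T k : LaurentPolynomial R) := by
      intro a
      refine ⟨a.coeff.support, fun k => a.coeff k, ?_⟩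
      conv_lhs => rw [← AddMonoidAlgebra.sum_coeff_single a]
      refine Finset.sum_congr rfl fun k _ => ?_
      rw [Algebra.smul_def, ← LaurentPolynomial.C_eq_algebraMap,
        ← LaurentPolynomial.single_eq_C_mul_T]
    obtain ⟨s, n, rfl⟩ := repr_tensor (R := R) (M := M)
      (fun k : ℤ => (LaurentPolynomial.T k : LaurentPolynomial R)) heL z
    have hzz : ∑ k ∈ s, (LaurentPolynomial.T k : LaurentPolynomial R) ⊗ₜ[R] n k =
        ∑ k ∈ s.filter (fun k => n k ≠ 0),
          (LaurentPolynomial.T k : LaurentPolynomial R) ⊗ₜ[R] n k := by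
      symm
      refine Finset.sum_filter_of_ne ?_
      intro x hx h hnx
      exact h (by rw [hnx, TensorProduct.tmul_zero])
    set s' := s.filter (fun k => n k ≠ 0) with hs'
    rw [hzz] at hz ⊢
    have hev : ∀ c : ℤ, ∃ φ : LaurentPolynomial R →+ R, ∀ p : LaurentPolynomial R, φ p = p.coeff c :=
      fun c => ⟨{ toFun := fun p => p.coeff c, map_zero' := by simp, map_add' := fun p q => by simp },
        fun _ => rfl⟩
    have hall : ∀ k ∈ s', k = 0 := by
      intro k hk
      by_contra hk0
      have hne : s'.Nonempty := ⟨k, hk⟩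
      -- choose the extremal exponent
      obtain ⟨d, hds, hdext, hd0⟩ :
          ∃ d, d ∈ s' ∧ (∀ i ∈ s', ∀ j ∈ s', i + j = d + d → i = d ∧ j = d) ∧ d ≠ 0 := by
        by_cases hpos : 0 < s'.max' hne
        · refine ⟨s'.max' hne, s'.max'_mem hne, fun i hi j hj hij => ?_, by omega⟩
          have h1 := s'.le_max' i hi
          have h2 := s'.le_max' j hj
          omega
        · have hkneg : k < 0 := by
            have := s'.le_max' k hk
            omega
          have hmin := s'.min'_le k hk
          refine ⟨s'.min' hne, s'.min'_mem hne, fun i hi j hj hij => ?_, by omega⟩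
          have h1 := s'.min'_le i hi
          have h2 := s'.min'_le j hj
          omega
      obtain ⟨φ, hφ⟩ := hev (d + d)
      have hcoeff := key_coeff (R := R) qL φ
        (fun k => (LaurentPolynomial.T k : LaurentPolynomial R) ⊗ₜ[R] n k) s' d hds (q (n d))
        (fun i hi => by
          rw [hL1, ← LaurentPolynomial.C_eq_algebraMap, sq, ← LaurentPolynomial.T_add,
            mul_comm, ← LaurentPolynomial.single_eq_C_mul_T, hφ, AddMonoidAlgebra.coeff_single, Finsupp.single_apply]
          by_cases hid : i = d
          · simp [hid]
          · have h1 : ¬ (i + i = d + d) := fun h => hid (hdext i hi i hi h).1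
            simp [h1, hid])
        (fun i hi j hj hij => by
          rw [hL2, ← LaurentPolynomial.C_eq_algebraMap, ← LaurentPolynomial.T_add,
            mul_comm, ← LaurentPolynomial.single_eq_C_mul_T, hφ, AddMonoidAlgebra.coeff_single, Finsupp.single_apply]
          have h1 : ¬ (i + j = d + d) := fun h => hij ((hdext i hi j hj h).1.trans
            (hdext i hi j hj h).2.symm)
          simp [h1])
      rw [hz, hφ] at hcoeff
      have hone : (1 : LaurentPolynomial R).coeff (d + d) = 0 := by
        rw [← LaurentPolynomial.single_zero_one_eq_one, AddMonoidAlgebra.coeff_single, Finsupp.single_apply]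
        have : ¬ ((0 : ℤ) = d + d) := by omega
        simp [this]
      rw [hone] at hcoeff
      exact (Finset.mem_filter.mp hds).2 (hq0 _ hcoeff.symm)
    rcases Finset.subset_singleton_iff.mp
        (fun k hk => Finset.mem_singleton.mpr (hall k hk)) with h | h
    · rw [h, Finset.sum_empty, QuadraticMap.map_zero] at hz
      exact absurd hz zero_ne_one
    · rw [h, Finset.sum_singleton, LaurentPolynomial.T_zero] at hz ⊢
      rw [hL1, one_pow, one_mul, ← LaurentPolynomial.C_eq_algebraMap] at hz
      exact ⟨n 0, hCinj (hz.trans (map_one LaurentPolynomial.C).symm), rfl⟩
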